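/- Let F be a field, let r ≤ u be positive integers, and let A ∈ F^{r×u} be a totally nonsingular matrix. Then the r × (r + u) matrix [I | A], obtained by appending the r × r identity matrix to A, is an MDS matrix: every r × r submatrix formed by selecting any r distinct columns of [I | A] is nonsingular. -/

import Mathlib

/-- A matrix is totally nonsingular if every square submatrix (given by injections
selecting rows and columns) is nonsingular. -/
def IsTotallyNonsingular {F : Type*} [Field F] {r u : ℕ}
    (A : Matrix (Fin r) (Fin u) F) : Prop :=
  ∀ (k : ℕ), 1 ≤ k → ∀ (ρ : Fin k → Fin r) (σ : Fin k → Fin u),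
    Function.Injective ρ → Function.Injective σ →
      (Matrix.of fun p q : Fin k => A (ρ p) (σ q)).det ≠ 0

/-- A matrix G with r rows (and columns indexed by an arbitrary type) is MDS if every
r × r submatrix formed by selecting any r distinct columns is nonsingular. -/
def IsMDS {F : Type*} [Field F] {r : ℕ} {n : Type*}
    (G : Matrix (Fin r) n F) : Prop :=
  ∀ σ : Fin r → n, Function.Injective σ →
    (Matrix.of fun p q : Fin r => G p (σ q)).det ≠ 0

/-- Let r ≤ u be positive integers and A ∈ F^{r×u} a totally nonsingular
matrix.  Then the r × (r + u) matrix [I | A] is an MDS matrix. -/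
theorem stmt_8 {F : Type*} [Field F] {r u : ℕ}
    (hr : 0 < r) (hu : 0 < u) (hru : r ≤ u)
    (A : Matrix (Fin r) (Fin u) F) (hA : IsTotallyNonsingular A) :
    IsMDS (Matrix.fromCols (1 : Matrix (Fin r) (Fin r) F) A) := by
  intro σ hσ hdet
  obtain ⟨v, hv0, hv⟩ := Matrix.exists_mulVec_eq_zero_iff.mpr hdet
  set g : Fin r ⊕ Fin u → Fin r := Sum.elim id (fun _ => ⟨0, hr⟩) with hg
  set hfun : Fin r ⊕ Fin u → Fin u := Sum.elim (fun _ => ⟨0, hu⟩) id with hh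
  set T : Finset (Fin r) := Finset.univ.filter (fun q => (σ q).isRight) with hTdef
  have hTmem : ∀ q, q ∈ T ↔ (σ q).isRight = true := by
    intro q; simp [hTdef]
  have hSr : ∀ q ∈ T, σ q = Sum.inr (hfun (σ q)) := by
    intro q hq
    rcases hx : σ q with i | j
    · rw [hTmem, hx] at hq; simp at hq
    · simp [hh, hx]
  have hSl : ∀ q ∉ T, σ q = Sum.inl (g (σ q)) := by
    intro q hq
    rcases hx : σ q with i | j
    · simp [hg, hx]
    · rw [hTmem, hx] at hq; simp at hq
  have hginj : Set.InjOn (fun q => g (σ q)) ((Tᶜ : Finset (Fin r)) : Set (Fin r)) := by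
    intro a ha b hb hab
    simp only [Finset.coe_compl, Set.mem_compl_iff, Finset.mem_coe] at ha hb
    apply hσ
    rw [hSl a ha, hSl b hb]
    simpa using hab
  set I : Finset (Fin r) := (Tᶜ).image (fun q => g (σ q)) with hIdef
  have hIcard : I.card = (Tᶜ).card := Finset.card_image_of_injOn hginj
  have hJcard : (Iᶜ).card = T.card := by
    have h1 := Finset.card_compl I
    have h2 := Finset.card_compl T
    have h3 : T.card ≤ r := by simpa using Finset.card_le_univ T
    simp only [Fintype.card_fin] at h1 h2
    omega
  -- key: rows outside I kill the identity part
  have key : ∀ p ∈ Iᶜ, ∑ q ∈ T, A p (hfun (σ q)) * v q = 0 := by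
    intro p hp
    have hrow : ∑ q, Matrix.fromCols (1 : Matrix (Fin r) (Fin r) F) A p (σ q) * v q = 0 := by
      have := congrFun hv p
      simpa [Matrix.mulVec, dotProduct] using this
    rw [← Finset.sum_compl_add_sum T] at hrow
    have hz : ∑ q ∈ Tᶜ, Matrix.fromCols (1 : Matrix (Fin r) (Fin r) F) A p (σ q) * v q = 0 := by
      apply Finset.sum_eq_zero
      intro q hq
      rw [hSl q (Finset.mem_compl.mp hq), Matrix.fromCols_apply_inl, Matrix.one_apply]
      have hpq : p ≠ g (σ q) := by
        intro hpe
        apply Finset.mem_compl.mp hp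
        rw [hIdef, hpe]
        exact Finset.mem_image_of_mem _ hq
      simp [hpq]
    rw [hz, zero_add] at hrow
    calc ∑ q ∈ T, A p (hfun (σ q)) * v q
        = ∑ q ∈ T, Matrix.fromCols (1 : Matrix (Fin r) (Fin r) F) A p (σ q) * v q := by
          apply Finset.sum_congr rfl
          intro q hq
          rw [hSr q hq, Matrix.fromCols_apply_inr]
          rw [← hSr q hq]
      _ = 0 := hrow
  -- step 1: v vanishes on T
  have hvT : ∀ q ∈ T, v q = 0 := by
    rcases Nat.eq_zero_or_pos T.card with hk | hk
    · intro q hq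
      exact absurd hq (by simp [Finset.card_eq_zero.mp hk])
    · have eT : Fin T.card → {x // x ∈ T} := T.equivFin.symm
      clear eT
      set eT : Fin T.card → {x // x ∈ T} := fun q => T.equivFin.symm q with heT
      have hkJ : T.card = (Iᶜ).card := hJcard.symm
      set eJ : Fin T.card → {x // x ∈ Iᶜ} := fun p => (Iᶜ).equivFin.symm (Fin.cast hkJ p) with heJ
      set ρ : Fin T.card → Fin r := fun p => (eJ p : Fin r) with hρ
      set τ : Fin T.card → Fin u := fun q => hfun (σ (eT q)) with hτ
      have hρinj : Function.Injective ρ := by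
        intro a b hab
        have h1 : eJ a = eJ b := Subtype.ext hab
        exact Fin.cast_injective hkJ ((Iᶜ).equivFin.symm.injective h1)
      have hτinj : Function.Injective τ := by
        intro a b hab
        have h1 : σ ((eT a : Fin r)) = σ ((eT b : Fin r)) := by
          rw [hSr _ (eT a).2, hSr _ (eT b).2]
          simpa [hτ] using hab
        have h2 := hσ h1
        have : eT a = eT b := Subtype.ext h2
        exact T.equivFin.symm.injective this
      set w : Fin T.card → F := fun q => v (eT q) with hw
      have hBw : (Matrix.of fun p q : Fin T.card => A (ρ p) (τ q)).mulVec w = 0 := by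
        funext p
        have hsum : ∑ q : Fin T.card, A (ρ p) (τ q) * w q = ∑ q ∈ T, A (ρ p) (hfun (σ q)) * v q := by
          rw [← Finset.sum_attach T (fun q => A (ρ p) (hfun (σ q)) * v q)]
          exact Fintype.sum_equiv T.equivFin.symm _ _ (fun q => rfl)
        simp only [Matrix.mulVec, dotProduct, Matrix.of_apply, Pi.zero_apply]
        rw [hsum]
        exact key (ρ p) (eJ p).2
      have hw0 : w = 0 := by
        by_contra hwne
        exact hA T.card hk ρ τ hρinj hτinj (Matrix.exists_mulVec_eq_zero_iff.mp ⟨w, hwne, hBw⟩)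
      intro q hq
      have : v ((eT (T.equivFin ⟨q, hq⟩) : Fin r)) = 0 := congrFun hw0 (T.equivFin ⟨q, hq⟩)
      simpa [heT] using this
  -- step 2: v vanishes off T
  have hvS : ∀ q, q ∉ T → v q = 0 := by
    intro q hq
    have hrow : ∑ q', Matrix.fromCols (1 : Matrix (Fin r) (Fin r) F) A (g (σ q)) (σ q') * v q' = 0 := by
      have := congrFun hv (g (σ q))
      simpa [Matrix.mulVec, dotProduct] using this
    rw [← Finset.sum_compl_add_sum T] at hrow
    have hz : ∑ q' ∈ T, Matrix.fromCols (1 : Matrix (Fin r) (Fin r) F) A (g (σ q)) (σ q') * v q' = 0 := by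
      apply Finset.sum_eq_zero
      intro q' hq'
      rw [hvT q' hq', mul_zero]
    rw [hz, add_zero] at hrow
    have hone : ∑ q' ∈ Tᶜ, Matrix.fromCols (1 : Matrix (Fin r) (Fin r) F) A (g (σ q)) (σ q') * v q' = v q := by
      rw [Finset.sum_eq_single q]
      · rw [hSl q hq, Matrix.fromCols_apply_inl, ← hSl q hq, Matrix.one_apply_eq, one_mul]
      · intro q' hq' hne
        rw [hSl q' (Finset.mem_compl.mp hq'), Matrix.fromCols_apply_inl, Matrix.one_apply]
        have : g (σ q) ≠ g (σ q') := by
          intro he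
          exact hne (hginj (by simpa using hq') (by simpa using hq) he.symm)
        simp [this]
      · intro hqc
        exact absurd (Finset.mem_compl.mpr hq) hqc
    rw [hone] at hrow
    exact hrow
  apply hv0
  funext q
  by_cases hq : q ∈ T
  · exact hvT q hq
  · exact hvS q hq
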